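/- The function T(k) = Σ_{n=0}^{k} T(n+1, k−n)·p₁(n|k) is non-decreasing in k, i.e. T(k+1) ≥ T(k) for all k ≥ 0, for all values of μ₁, μ₂ > 0. -/

import Mathlib

/-- `p₁(n|k)`: conditional probability that the stationary queue length at node 1 equals `n`
given `k` customers in total; `0` for `n > k`. -/
noncomputable def p1 (μ₁ μ₂ : ℝ) (n k : ℕ) : ℝ :=
  if n ≤ k then μ₁ ^ (k - n) * μ₂ ^ n / ∑ h ∈ Finset.range (k + 1), μ₁ ^ (k - h) * μ₂ ^ h
  else 0

section Aux
variable {μ₁ μ₂ : ℝ} (hμ₁ : 0 < μ₁) (hμ₂ : 0 < μ₂)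
    {T : ℕ × ℕ → ℝ}
    (hT0 : ∀ m : ℕ, T (0, m) = m / μ₂)
    (hTb : ∀ n : ℕ, T (n + 1, 0) = 1 / μ₁ + T (n, 1))
    (hTrec : ∀ n m : ℕ, T (n + 1, m + 1) =
      1 / (μ₁ + μ₂) + μ₁ / (μ₁ + μ₂) * T (n, m + 2) + μ₂ / (μ₁ + μ₂) * T (n + 1, m))

include hμ₁ hμ₂ hT0 hTb hTrec

/-- `T` is monotone in the second coordinate. -/
lemma monoM : ∀ n m : ℕ, T (n, m) ≤ T (n, m + 1) := by
  have hs : (0:ℝ) < μ₁ + μ₂ := by linarith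
  intro n
  induction n with
  | zero =>
    intro m
    rw [hT0, hT0]
    have hm : (m:ℝ) ≤ ((m+1:ℕ):ℝ) := by push_cast; linarith
    gcongr
  | succ n ih =>
    intro m
    induction m with
    | zero =>
      have hx : T (n, 1) ≤ T (n, 0 + 2) := ih 1
      have key : T (n+1, 0) = 1/(μ₁+μ₂) + μ₁/(μ₁+μ₂) * T (n, 1)
          + μ₂/(μ₁+μ₂) * T (n+1, 0) := by
        rw [hTb n]; field_simp
      rw [hTrec n 0]
      nth_rewrite 1 [key]
      gcongr
    | succ m ihm =>
      have h1 : T (n, m + 2) ≤ T (n, m + 1 + 2) := ih (m + 2)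
      rw [hTrec n m, hTrec n (m+1)]
      gcongr

/-- diagonal monotonicity: moving a customer from node 2 to node 1 increases sojourn. -/
lemma monoD : ∀ n m : ℕ, T (n, m + 1) ≤ T (n + 1, m) := by
  have hs : (0:ℝ) < μ₁ + μ₂ := by linarith
  intro n
  induction n with
  | zero =>
    intro m
    induction m with
    | zero =>
      rw [hTb 0]
      have : (0:ℝ) < 1/μ₁ := by positivity
      linarith
    | succ m ihm =>
      have hrec := hTrec 0 m
      have hq : (0:ℝ) ≤ μ₂/(μ₁+μ₂) := by positivity
      have hqx := mul_le_mul_of_nonneg_left ihm hq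
      have e1 : T (0, m+1+1) = 1/(μ₁+μ₂) + μ₁/(μ₁+μ₂) * T (0, m+2)
          + μ₂/(μ₁+μ₂) * T (0, m+1) := by
        simp only [hT0]
        push_cast
        field_simp
        ring
      linarith [hrec]
  | succ n ih =>
    intro m
    induction m with
    | zero =>
      rw [hTb (n+1)]
      have : (0:ℝ) < 1/μ₁ := by positivity
      linarith
    | succ m ihm =>
      have h1 : T (n, m + 1 + 2) ≤ T (n + 1, m + 2) := ih (m + 2)
      rw [hTrec n (m+1), hTrec (n+1) m]
      gcongr

/-- iterated diagonal monotonicity. -/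
lemma monoDJ : ∀ j a b : ℕ, T (a, b + j) ≤ T (a + j, b) := by
  intro j
  induction j with
  | zero => intro a b; simp
  | succ j ih =>
    intro a b
    have h1 : T (a, b + (j+1)) ≤ T (a + 1, b + j) := by
      have := monoD hμ₁ hμ₂ hT0 hTb hTrec a (b + j)
      have he : b + j + 1 = b + (j + 1) := by omega
      rwa [he] at this
    have h2 : T (a + 1, b + j) ≤ T (a + 1 + j, b) := ih (a+1) b
    have he : a + 1 + j = a + (j + 1) := by omega
    rw [he] at h2
    linarith

end Aux

/-- The total expected sojourn time `T(k) = Σ_{n=0}^{k} T(n+1, k−n)·p₁(n|k)` is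
non-decreasing in `k`, for all values of `μ₁, μ₂ > 0`. -/
theorem stmt_17 (μ₁ μ₂ : ℝ) (hμ₁ : 0 < μ₁) (hμ₂ : 0 < μ₂)
    (T : ℕ × ℕ → ℝ)
    (hT0 : ∀ m : ℕ, T (0, m) = m / μ₂)
    (hTb : ∀ n : ℕ, T (n + 1, 0) = 1 / μ₁ + T (n, 1))
    (hTrec : ∀ n m : ℕ, T (n + 1, m + 1) =
      1 / (μ₁ + μ₂) + μ₁ / (μ₁ + μ₂) * T (n, m + 2) + μ₂ / (μ₁ + μ₂) * T (n + 1, m)) :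
    ∀ k : ℕ,
      ∑ n ∈ Finset.range (k + 2), T (n + 1, k + 1 - n) * p1 μ₁ μ₂ n (k + 1) ≥
        ∑ n ∈ Finset.range (k + 1), T (n + 1, k - n) * p1 μ₁ μ₂ n k := by
  intro k
  have hM := monoM hμ₁ hμ₂ hT0 hTb hTrec
  have hDJ := monoDJ hμ₁ hμ₂ hT0 hTb hTrec
  set S₁ : ℝ := ∑ h ∈ Finset.range (k + 1), μ₁ ^ (k - h) * μ₂ ^ h with hS₁def
  set S₂ : ℝ := ∑ h ∈ Finset.range (k + 2), μ₁ ^ (k + 1 - h) * μ₂ ^ h with hS₂def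
  have hS₁ : 0 < S₁ := Finset.sum_pos (fun h _ => by positivity) ⟨0, by simp⟩
  have hS₂ : 0 < S₂ := Finset.sum_pos (fun h _ => by positivity) ⟨0, by simp⟩
  have hS₂eq : S₂ = μ₁ * S₁ + μ₂ ^ (k + 1) := by
    rw [hS₂def, Finset.sum_range_succ, hS₁def, Finset.mul_sum]
    simp only [Nat.sub_self, pow_zero, one_mul]
    congr 1
    apply Finset.sum_congr rfl
    intro h hh
    have : h ≤ k := by simpa [Nat.lt_succ_iff] using hh
    have he : k + 1 - h = (k - h) + 1 := by omega
    rw [he, pow_succ]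
    ring
  have hL : ∑ n ∈ Finset.range (k + 2), T (n + 1, k + 1 - n) * p1 μ₁ μ₂ n (k + 1)
      = (∑ n ∈ Finset.range (k + 2), T (n + 1, k + 1 - n) * (μ₁ ^ (k + 1 - n) * μ₂ ^ n)) / S₂ := by
    rw [Finset.sum_div]
    apply Finset.sum_congr rfl
    intro n hn
    have : n ≤ k + 1 := by simpa [Nat.lt_succ_iff] using hn
    rw [p1, if_pos this, ← hS₂def]
    ring
  have hR : ∑ n ∈ Finset.range (k + 1), T (n + 1, k - n) * p1 μ₁ μ₂ n k
      = (∑ n ∈ Finset.range (k + 1), T (n + 1, k - n) * (μ₁ ^ (k - n) * μ₂ ^ n)) / S₁ := by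
    rw [Finset.sum_div]
    apply Finset.sum_congr rfl
    intro n hn
    have : n ≤ k := by simpa [Nat.lt_succ_iff] using hn
    rw [p1, if_pos this, ← hS₁def]
    ring
  rw [hL, hR, ge_iff_le, div_le_div_iff₀ hS₁ hS₂]
  set B : ℝ := ∑ n ∈ Finset.range (k + 1), T (n + 1, k - n) * (μ₁ ^ (k - n) * μ₂ ^ n) with hBdef
  set C : ℝ := ∑ n ∈ Finset.range (k + 1), T (n + 1, k + 1 - n) * (μ₁ ^ (k - n) * μ₂ ^ n) with hCdef
  have hLsplit : ∑ n ∈ Finset.range (k + 2), T (n + 1, k + 1 - n) * (μ₁ ^ (k + 1 - n) * μ₂ ^ n)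
      = μ₁ * C + μ₂ ^ (k + 1) * T (k + 2, 0) := by
    rw [Finset.sum_range_succ, hCdef, Finset.mul_sum]
    simp only [Nat.sub_self, pow_zero, one_mul]
    congr 1
    apply Finset.sum_congr rfl
    intro n hn
    have : n ≤ k := by simpa [Nat.lt_succ_iff] using hn
    have he : k + 1 - n = (k - n) + 1 := by omega
    rw [he, pow_succ]
    ring
    have he2 : k + 1 + 1 = k + 2 := by omega
    rw [he2]
    ring
  rw [hLsplit]
  have hBC : B ≤ C := by
    apply Finset.sum_le_sum
    intro n hn
    have hnk : n ≤ k := by simpa [Nat.lt_succ_iff] using hn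
    have he : k + 1 - n = (k - n) + 1 := by omega
    have hm := hM (n + 1) (k - n)
    rw [← he] at hm
    exact mul_le_mul_of_nonneg_right hm (by positivity)
  have hTop : B ≤ S₁ * T (k + 2, 0) := by
    rw [hS₁def, Finset.sum_mul, hBdef]
    apply Finset.sum_le_sum
    intro n hn
    have hnk : n ≤ k := by simpa [Nat.lt_succ_iff] using hn
    have h1 : T (n + 1, k - n) ≤ T (n + 1, k + 1 - n) := by
      have he : k + 1 - n = (k - n) + 1 := by omega
      rw [he]; exact hM (n + 1) (k - n)
    have h2 : T (n + 1, k + 1 - n) ≤ T (k + 2, 0) := by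
      have h3 := hDJ (k + 1 - n) (n + 1) 0
      have he : n + 1 + (k + 1 - n) = k + 2 := by omega
      rw [he] at h3
      simpa using h3
    have hle := le_trans h1 h2
    calc T (n + 1, k - n) * (μ₁ ^ (k - n) * μ₂ ^ n)
        ≤ T (k + 2, 0) * (μ₁ ^ (k - n) * μ₂ ^ n) :=
          mul_le_mul_of_nonneg_right hle (by positivity)
      _ = μ₁ ^ (k - n) * μ₂ ^ n * T (k + 2, 0) := by ring
  have hpow : (0:ℝ) < μ₂ ^ (k + 1) := by positivity
  calc B * S₂ = μ₁ * B * S₁ + μ₂ ^ (k + 1) * B := by rw [hS₂eq]; ring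
    _ ≤ μ₁ * C * S₁ + μ₂ ^ (k + 1) * (S₁ * T (k + 2, 0)) := by
        have h3 := mul_le_mul_of_nonneg_right
          (mul_le_mul_of_nonneg_left hBC hμ₁.le) hS₁.le
        have h2 := mul_le_mul_of_nonneg_left hTop hpow.le
        linarith
    _ = (μ₁ * C + μ₂ ^ (k + 1) * T (k + 2, 0)) * S₁ := by ring
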